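/- Let S be a nontrivial proper subsemigroup of the positive rationals ℚ⁺ with 1 ∉ S, and let d = min(S ∩ ℕ). Let A be the 3 × 2 matrix with rows (d,0), (0,d), (d,d). Then A is image partition regular over S, but there do not exist k ∈ ℕ and a k × 3 rational matrix B such that {A x : x ∈ (S \ {0})²} ∩ (S \ {0})³ ⊆ {y ∈ (S \ {0})³ : B y = 0} ⊆ {A x : x ∈ S²} ∩ (S \ {0})³. -/

import Mathlib

open scoped BigOperators

/-- Matrix–vector product over ℚ, via `finsum`. -/
noncomputable def mulVecQ {u v : Type} (A : u → v → ℚ) (x : v → ℚ) : u → ℚ :=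
  fun i => ∑ᶠ j, A i j * x j

/-- `A` is image partition regular over `S`. -/
def IPRQ {u v : Type} (A : u → v → ℚ) (S : Set ℚ) : Prop :=
  ∀ (k : ℕ) (φ : ℚ → Fin k), ∃ x : v → ℚ,
    (∀ j, x j ∈ S \ {0}) ∧ (∀ i, mulVecQ A x i ∈ S \ {0}) ∧
    (∀ i i', φ (mulVecQ A x i) = φ (mulVecQ A x i'))

/-- A natural multiple (with positive multiplier) of an element of an additive
subsemigroup stays in the subsemigroup. -/
lemma nat_mul_mem_aux (S : AddSubsemigroup ℚ) {x : ℚ} (hx : x ∈ S) :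
    ∀ n : ℕ, n ≠ 0 → (n : ℚ) * x ∈ S := by
  intro n hn
  induction n with
  | zero => exact absurd rfl hn
  | succ m ih =>
    rcases Nat.eq_zero_or_pos m with hm | hm
    · subst hm; simpa using hx
    · have h := ih hm.ne'
      have : ((m + 1 : ℕ) : ℚ) * x = (m : ℚ) * x + x := by push_cast; ring
      rw [this]
      exact S.add_mem h hx

theorem stmt9 (S : AddSubsemigroup ℚ) (hpos : ∀ s ∈ S, (0 : ℚ) < s)
    (hne : ∃ s, s ∈ S) (hproper : (S : Set ℚ) ≠ {q : ℚ | 0 < q})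
    (hone : (1 : ℚ) ∉ S)
    (d : ℕ) (hd : (d : ℚ) ∈ S) (hdmin : ∀ n : ℕ, (n : ℚ) ∈ S → d ≤ n)
    (A : Fin 3 → Fin 2 → ℚ)
    (hAdef : A = ![![(d : ℚ), 0], ![0, (d : ℚ)], ![(d : ℚ), (d : ℚ)]]) :
    IPRQ A (S : Set ℚ) ∧
    ¬ ∃ (k : ℕ) (B : Fin k → Fin 3 → ℚ),
        ({y : Fin 3 → ℚ | ∃ x : Fin 2 → ℚ, (∀ j, x j ∈ (S : Set ℚ) \ {0}) ∧ y = mulVecQ A x} ∩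
            {y : Fin 3 → ℚ | ∀ i, y i ∈ (S : Set ℚ) \ {0}} ⊆
          {y : Fin 3 → ℚ | (∀ i, y i ∈ (S : Set ℚ) \ {0}) ∧ ∀ l, mulVecQ B y l = 0}) ∧
        ({y : Fin 3 → ℚ | (∀ i, y i ∈ (S : Set ℚ) \ {0}) ∧ ∀ l, mulVecQ B y l = 0} ⊆
          {y : Fin 3 → ℚ | ∃ x : Fin 2 → ℚ, (∀ j, x j ∈ (S : Set ℚ)) ∧ y = mulVecQ A x} ∩
            {y : Fin 3 → ℚ | ∀ i, y i ∈ (S : Set ℚ) \ {0}}) := by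
  have hdpos : (0 : ℚ) < (d : ℚ) := hpos _ hd
  have hdne : (d : ℚ) ≠ 0 := hdpos.ne'
  have hdnat : d ≠ 0 := fun h => hdne (by exact_mod_cast congrArg (Nat.cast : ℕ → ℚ) h)
  have hdmul : ∀ x : ℚ, x ∈ S → (d : ℚ) * x ∈ S := fun x hx => nat_mul_mem_aux S hx d hdnat
  constructor
  · -- image partition regularity, via Hindman's theorem
    intro k φ
    haveI : Nonempty S := ⟨⟨hne.choose, hne.choose_spec⟩⟩
    set cells : Fin k → Set S := fun i => {s : S | φ ((d : ℚ) * (s : ℚ)) = i} with hcells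
    obtain ⟨c, hc, a, hFS⟩ := Hindman.exists_FS_of_finite_cover (Set.range cells)
      (Set.finite_range cells) (by
        intro s _
        exact ⟨cells (φ ((d : ℚ) * (s : ℚ))), ⟨_, rfl⟩, rfl⟩)
    obtain ⟨i₀, rfl⟩ := hc
    set a0 : S := a.get 0 with ha0
    set a1 : S := a.get 1 with ha1
    have h0 : a0 ∈ Hindman.FS a := Hindman.FS.singleton a 0
    have h1 : a1 ∈ Hindman.FS a := Hindman.FS.singleton a 1
    have h01 : a0 + a1 ∈ Hindman.FS a := Hindman.FS.add_two a 0 1 (by norm_num)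
    have hval : mulVecQ A ![(a0 : ℚ), (a1 : ℚ)]
        = ![(d : ℚ) * (a0 : ℚ), (d : ℚ) * (a1 : ℚ), (d : ℚ) * ((a0 : ℚ) + (a1 : ℚ))] := by
      funext i
      fin_cases i <;>
        simp [mulVecQ, hAdef, finsum_eq_sum_of_fintype, Fin.sum_univ_two] <;> ring
    refine ⟨![(a0 : ℚ), (a1 : ℚ)], ?_, ?_, ?_⟩
    · intro j
      fin_cases j
      · exact ⟨a0.2, fun h => (hpos _ a0.2).ne' (by simpa using h)⟩
      · exact ⟨a1.2, fun h => (hpos _ a1.2).ne' (by simpa using h)⟩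
    · intro i
      rw [hval]
      fin_cases i
      · exact ⟨hdmul _ a0.2,
          fun h => (mul_pos hdpos (hpos _ a0.2)).ne' (by simpa using h)⟩
      · exact ⟨hdmul _ a1.2,
          fun h => (mul_pos hdpos (hpos _ a1.2)).ne' (by simpa using h)⟩
      · exact ⟨hdmul _ (S.add_mem a0.2 a1.2),
          fun h => (mul_pos hdpos (add_pos (hpos _ a0.2) (hpos _ a1.2))).ne'
            (by simpa using h)⟩
    · have key : ∀ i : Fin 3, φ (mulVecQ A ![(a0 : ℚ), (a1 : ℚ)] i) = i₀ := by
        intro i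
        rw [hval]
        fin_cases i
        · simpa [hcells] using hFS h0
        · simpa [hcells] using hFS h1
        · have h3 := hFS h01
          simp only [hcells, Set.mem_setOf_eq] at h3
          have hco : ((a0 + a1 : S) : ℚ) = (a0 : ℚ) + (a1 : ℚ) := rfl
          rw [hco] at h3
          simpa using h3
      intro i i'
      rw [key, key]
  · -- no such matrix B
    rintro ⟨k, B, h1, h2⟩
    have hdd : (d : ℚ) * (d : ℚ) ∈ S := hdmul _ hd
    have h2d : (d : ℚ) + (d : ℚ) ∈ S := S.add_mem hd hd
    set y0 : Fin 3 → ℚ := ![(d:ℚ)*(d:ℚ), (d:ℚ)*(d:ℚ), (d:ℚ)*(d:ℚ) + (d:ℚ)*(d:ℚ)] with hy0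
    have hy0img : y0 = mulVecQ A ![(d:ℚ), (d:ℚ)] := by
      funext i
      fin_cases i <;>
        simp [mulVecQ, hAdef, finsum_eq_sum_of_fintype, Fin.sum_univ_two, hy0]
    have hy0mem : ∀ i, y0 i ∈ (S : Set ℚ) \ {0} := by
      intro i
      rw [hy0]
      fin_cases i
      · exact ⟨hdd, fun h => (mul_pos hdpos hdpos).ne' (by simpa using h)⟩
      · exact ⟨hdd, fun h => (mul_pos hdpos hdpos).ne' (by simpa using h)⟩
      · exact ⟨S.add_mem hdd hdd,
          fun h => (add_pos (mul_pos hdpos hdpos) (mul_pos hdpos hdpos)).ne'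
            (by simpa using h)⟩
    have hB0 : ∀ l, mulVecQ B y0 l = 0 := by
      have := h1 ⟨⟨![(d:ℚ), (d:ℚ)], fun j => by
        fin_cases j <;> exact ⟨hd, fun h => hdne (by simpa using h)⟩, hy0img⟩, hy0mem⟩
      exact this.2
    set y : Fin 3 → ℚ := ![(d:ℚ), (d:ℚ), (d:ℚ) + (d:ℚ)] with hy
    have hBy : ∀ l, mulVecQ B y l = 0 := by
      intro l
      have h := hB0 l
      simp only [mulVecQ, finsum_eq_sum_of_fintype, Fin.sum_univ_three, hy0, hy,
        Matrix.cons_val_zero, Matrix.cons_val_one, Matrix.head_cons,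
        Matrix.cons_val_two, Matrix.tail_cons] at h ⊢
      have h' : (d:ℚ) * (B l 0 * (d:ℚ) + B l 1 * (d:ℚ) + B l 2 * ((d:ℚ) + (d:ℚ))) = 0 := by
        linear_combination h
      rcases mul_eq_zero.mp h' with h'' | h''
      · exact absurd h'' hdne
      · linear_combination h''
    have hymem : ∀ i, y i ∈ (S : Set ℚ) \ {0} := by
      intro i
      rw [hy]
      fin_cases i
      · exact ⟨hd, fun h => hdne (by simpa using h)⟩
      · exact ⟨hd, fun h => hdne (by simpa using h)⟩
      · exact ⟨h2d, fun h => (add_pos hdpos hdpos).ne' (by simpa using h)⟩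
    obtain ⟨⟨x, hx, hyx⟩, -⟩ := h2 ⟨hymem, hBy⟩
    have heq : y 0 = (d : ℚ) * x 0 := by
      have h' : mulVecQ A x 0 = (d : ℚ) * x 0 := by
        simp [mulVecQ, hAdef, finsum_eq_sum_of_fintype, Fin.sum_univ_two]
      rw [hyx, h']
    have hy0val : y 0 = (d : ℚ) := by rw [hy]; rfl
    have hx0 : x 0 = 1 := by
      have h' : (d : ℚ) * x 0 = (d : ℚ) * 1 := by
        rw [mul_one, ← heq, hy0val]
      exact mul_left_cancel₀ hdne h'
    exact hone (by rw [← hx0]; exact hx 0)
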